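/- Let x : ℤ × ℤ → ℂ be nowhere zero and μ : ℤ → ℂ. Define y(l,m) = μ(m)·x(l,m)/x(l,m+1). Then the pair (x,y) satisfies the system x(l+1,m+1)/x(l,m+1) + y(l,m) = x(l+1,m+1)/x(l+1,m) and x(l+1,m)/x(l,m) + y(l+1,m) = x(l,m+1)/x(l,m) for all (l,m) if and only if x satisfies the degenerate lattice modified KdV equation x(l+1,m+1)·(x(l,m+1) − x(l+1,m)) = μ(m)·x(l+1,m)·x(l,m) for all (l,m). -/

import Mathlib

theorem stmt_2 (x : ℤ × ℤ → ℂ) (hx : ∀ p, x p ≠ 0) (μ : ℤ → ℂ)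
    (y : ℤ × ℤ → ℂ) (hy : ∀ l m : ℤ, y (l, m) = μ m * x (l, m) / x (l, m+1)) :
    (∀ l m : ℤ,
      x (l+1, m+1) / x (l, m+1) + y (l, m) = x (l+1, m+1) / x (l+1, m) ∧
      x (l+1, m) / x (l, m) + y (l+1, m) = x (l, m+1) / x (l, m)) ↔
    (∀ l m : ℤ,
      x (l+1, m+1) * (x (l, m+1) - x (l+1, m)) = μ m * x (l+1, m) * x (l, m)) := by
  constructor
  · intro h l m
    have h1 := (h l m).1
    rw [hy] at h1
    have a := hx (l, m+1)
    have b := hx (l+1, m)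
    field_simp [a, b] at h1
    linear_combination -h1
  · intro h l m
    have h1 := h l m
    have a := hx (l, m+1)
    have b := hx (l+1, m)
    have c := hx (l, m)
    have d := hx (l+1, m+1)
    constructor
    · rw [hy]
      field_simp [a, b]
      linear_combination -h1
    · rw [hy]
      field_simp [a, b, c, d]
      linear_combination -h1
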